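/- Let q be a power of an odd prime p, let 𝔽_q be the finite field with q elements, let K be an algebraic closure of 𝔽_q, and let σ : K → K be the Frobenius map σ(x) = x^q. For every integer n ≥ 2, the number of n-element subsets S ⊆ K with σ(S) = S equals q^n − q^{n−1}; for n = 1 this number equals q. -/

import Mathlib

open Polynomial

namespace Stmt5Aux

variable {F : Type*} [Field F]

theorem sq_decomp_exists : ∀ (n : ℕ) (f : F[X]), f.Monic → f.natDegree = n →
    ∃ a b : F[X], a.Monic ∧ Squarefree a ∧ b.Monic ∧ f = a * b ^ 2 := by
  intro n
  induction n using Nat.strong_induction_on with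
  | _ n ih =>
    intro f hf hdeg
    by_cases hsq : Squarefree f
    · exact ⟨f, 1, hf, hsq, monic_one, by ring⟩
    · simp only [Squarefree, not_forall] at hsq
      obtain ⟨x, hxdvd, hxu⟩ := hsq
      have hf0 : f ≠ 0 := hf.ne_zero
      have hx0 : x ≠ 0 := by
        rintro rfl
        exact hf0 (zero_dvd_iff.mp (by simpa using hxdvd))
      obtain ⟨r, hrirr, hrdvd⟩ := WfDvdMonoid.exists_irreducible_factor hxu hx0
      have hr0 : r ≠ 0 := hrirr.ne_zero
      -- monic associate of r
      set s : F[X] := r * C r.leadingCoeff⁻¹ with hs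
      have hsm : s.Monic := monic_mul_leadingCoeff_inv hr0
      have hsdeg : s.natDegree = r.natDegree := by
        rw [hs, natDegree_mul hr0 (by simp [leadingCoeff_ne_zero.mpr hr0]), natDegree_C, add_zero]
      have hspos : 0 < s.natDegree := by
        rw [hsdeg]
        exact hrirr.natDegree_pos
      have hr2 : r ^ 2 ∣ f := dvd_trans (by rw [sq]; exact mul_dvd_mul hrdvd hrdvd) hxdvd
      have hcu : IsUnit (C r.leadingCoeff⁻¹) :=
        isUnit_C.mpr (isUnit_iff_ne_zero.mpr (inv_ne_zero (leadingCoeff_ne_zero.mpr hr0)))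
      have hassoc : Associated s r := (associated_mul_unit_left r _ hcu)
      have hs2dvd : s ^ 2 ∣ f := dvd_trans (hassoc.pow_pow.dvd) hr2
      obtain ⟨g, hg⟩ := hs2dvd
      have hgm : g.Monic := by
        have := hf
        rw [hg] at this
        exact (hsm.pow 2).of_mul_monic_left this
      have hglt : g.natDegree < n := by
        have : f.natDegree = s.natDegree * 2 + g.natDegree := by
          rw [hg, natDegree_mul (pow_ne_zero 2 hsm.ne_zero) hgm.ne_zero, natDegree_pow]; ring
        omega
      obtain ⟨a, b, ham, hasq, hbm, hab⟩ := ih g.natDegree hglt g hgm rfl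
      exact ⟨a, s * b, ham, hasq, hsm.mul hbm, by rw [hg, hab]; ring⟩

theorem sq_decomp_unique {a1 b1 a2 b2 : F[X]} (hs1 : Squarefree a1)
    (hb1 : b1.Monic) (hs2 : Squarefree a2) (hb2 : b2.Monic)
    (h : a1 * b1 ^ 2 = a2 * b2 ^ 2) : a1 = a2 ∧ b1 = b2 := by
  classical
  letI : GCDMonoid F[X] := EuclideanDomain.gcdMonoid _
  have hb10 : b1 ≠ 0 := hb1.ne_zero
  have hb20 : b2 ≠ 0 := hb2.ne_zero
  set d : F[X] := GCDMonoid.gcd b1 b2 with hd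
  have hd0 : d ≠ 0 := gcd_ne_zero_of_left hb10
  set c1 : F[X] := b1 / d with hc1
  set c2 : F[X] := b2 / d with hc2
  have hcop : IsCoprime c1 c2 := isCoprime_div_gcd_div_gcd hb20
  have hb1e : b1 = d * c1 := (EuclideanDomain.mul_div_cancel' hd0 (gcd_dvd_left b1 b2)).symm
  have hb2e : b2 = d * c2 := (EuclideanDomain.mul_div_cancel' hd0 (gcd_dvd_right b1 b2)).symm
  have key : a1 * c1 ^ 2 = a2 * c2 ^ 2 := by
    have h' : d ^ 2 * (a1 * c1 ^ 2) = d ^ 2 * (a2 * c2 ^ 2) := by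
      rw [hb1e, hb2e] at h; ring_nf at h ⊢; linear_combination h
    exact mul_left_cancel₀ (pow_ne_zero 2 hd0) h'
  have hu1 : IsUnit c1 := by
    apply hs2 c1
    have : c1 ^ 2 ∣ a2 * c2 ^ 2 := key ▸ Dvd.intro_left a1 rfl
    have := (hcop.pow (n := 2) (m := 2)).dvd_of_dvd_mul_right this
    rwa [← sq]
  have hu2 : IsUnit c2 := by
    apply hs1 c2
    have : c2 ^ 2 ∣ a1 * c1 ^ 2 := key ▸ Dvd.intro_left a2 rfl
    have := ((hcop.symm).pow (n := 2) (m := 2)).dvd_of_dvd_mul_right this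
    rwa [← sq]
  have hbb : b1 = b2 := by
    refine Polynomial.eq_of_monic_of_associated hb1 hb2 (associated_of_dvd_dvd ?_ ?_)
    · exact dvd_trans (hb1e ▸ (hu1.mul_right_dvd).mpr dvd_rfl) (hb2e ▸ Dvd.intro c2 rfl)
    · exact dvd_trans (hb2e ▸ (hu2.mul_right_dvd).mpr dvd_rfl) (hb1e ▸ Dvd.intro c1 rfl)
  refine ⟨?_, hbb⟩
  rw [hbb] at h
  exact mul_right_cancel₀ (pow_ne_zero 2 hb20) h

variable (F) [Fintype F]

theorem finite_M (n : ℕ) : {f : F[X] | f.Monic ∧ f.natDegree = n}.Finite := by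
  have h1 : Finite {p : F[X] // p.Monic ∧ p.natDegree = n} :=
    Finite.of_equiv _ ((monicEquivDegreeLT n).trans (degreeLTEquiv F n).toEquiv).symm
  exact Set.finite_coe_iff.mp h1

theorem finite_MS (n : ℕ) :
    {f : F[X] | (f.Monic ∧ f.natDegree = n) ∧ Squarefree f}.Finite :=
  (finite_M F n).subset fun _ h => h.1

theorem ncard_M (n : ℕ) :
    {f : F[X] | f.Monic ∧ f.natDegree = n}.ncard = Fintype.card F ^ n := by
  classical
  rw [← Nat.card_coe_set_eq]
  calc Nat.card {f : F[X] | f.Monic ∧ f.natDegree = n}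
      = Nat.card (Fin n → F) :=
        Nat.card_congr ((monicEquivDegreeLT n).trans (degreeLTEquiv F n).toEquiv)
    _ = Fintype.card F ^ n := by
        rw [Nat.card_eq_fintype_card, Fintype.card_fun, Fintype.card_fin]

theorem recursion (n : ℕ) :
    Fintype.card F ^ n =
      ∑ k ∈ Finset.range (n / 2 + 1),
        {f : F[X] | (f.Monic ∧ f.natDegree = n - 2*k) ∧ Squarefree f}.ncard
          * Fintype.card F ^ k := by
  classical
  set Mf : ℕ → Finset F[X] := fun m => (finite_M F m).toFinset with hMf
  set MSf : ℕ → Finset F[X] := fun m => (finite_MS F m).toFinset with hMSf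
  have hMfmem : ∀ m (f : F[X]), f ∈ Mf m ↔ f.Monic ∧ f.natDegree = m := by
    intro m f; simp [hMf, Set.Finite.mem_toFinset]
  have hMSfmem : ∀ m (f : F[X]),
      f ∈ MSf m ↔ (f.Monic ∧ f.natDegree = m) ∧ Squarefree f := by
    intro m f; simp [hMSf, Set.Finite.mem_toFinset]
  set φ : F[X] × F[X] → F[X] := fun ab => ab.1 * ab.2 ^ 2 with hφ
  set B : ℕ → Finset F[X] := fun k => ((MSf (n - 2*k)) ×ˢ (Mf k)).image φ with hB
  have hmemB : ∀ k f, f ∈ B k ↔ ∃ a b : F[X],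
      ((a.Monic ∧ a.natDegree = n - 2*k) ∧ Squarefree a) ∧
      (b.Monic ∧ b.natDegree = k) ∧ f = a * b ^ 2 := by
    intro k f
    simp only [hB, Finset.mem_image, Finset.mem_product, Prod.exists]
    constructor
    · rintro ⟨a, b, ⟨h1, h2⟩, rfl⟩
      exact ⟨a, b, (hMSfmem _ a).mp h1, (hMfmem _ b).mp h2, rfl⟩
    · rintro ⟨a, b, h1, h2, rfl⟩
      exact ⟨a, b, ⟨(hMSfmem _ a).mpr h1, (hMfmem _ b).mpr h2⟩, rfl⟩
  have hcover : Mf n = (Finset.range (n / 2 + 1)).biUnion B := by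
    ext f
    simp only [Finset.mem_biUnion, Finset.mem_range]
    rw [hMfmem]
    constructor
    · rintro ⟨hm, hdeg⟩
      obtain ⟨a, b, ham, hasq, hbm, hab⟩ := sq_decomp_exists f.natDegree f hm rfl
      have hdeg' : f.natDegree = a.natDegree + 2 * b.natDegree := by
        rw [hab, ham.natDegree_mul (hbm.pow 2), natDegree_pow]
      refine ⟨b.natDegree, by omega, (hmemB _ f).mpr ⟨a, b, ⟨⟨ham, by omega⟩, hasq⟩,
        ⟨hbm, rfl⟩, hab⟩⟩
    · rintro ⟨k, hk, hf⟩
      obtain ⟨a, b, ⟨⟨ham, hadeg⟩, _⟩, ⟨hbm, hbdeg⟩, rfl⟩ := (hmemB _ f).mp hf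
      have hmon : (a * b ^ 2).Monic := ham.mul (hbm.pow 2)
      refine ⟨hmon, ?_⟩
      rw [ham.natDegree_mul (hbm.pow 2), natDegree_pow]
      omega
  have hMS_card : ∀ m, (MSf m).card
      = {f : F[X] | (f.Monic ∧ f.natDegree = m) ∧ Squarefree f}.ncard := by
    intro m
    rw [Set.ncard_eq_toFinset_card _ (finite_MS F m)]
  have hM_card : ∀ m, (Mf m).card = Fintype.card F ^ m := by
    intro m
    rw [hMf, ← Set.ncard_eq_toFinset_card _ (finite_M F m), ncard_M]
  have hinj : ∀ k, Set.InjOn φ ((MSf (n - 2*k)) ×ˢ (Mf k) : Finset (F[X] × F[X])) := by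
    intro k ab hab cd hcd he
    simp only [Finset.coe_product, Set.mem_prod, Set.Finite.coe_toFinset, hMSf, hMf,
      Set.mem_setOf_eq] at hab hcd
    obtain ⟨⟨⟨ham1, _⟩, hs1⟩, hbm1, _⟩ := hab
    obtain ⟨⟨⟨ham2, _⟩, hs2⟩, hbm2, _⟩ := hcd
    obtain ⟨h1, h2⟩ := sq_decomp_unique hs1 hbm1 hs2 hbm2 he
    exact Prod.ext h1 h2
  have hdisj : ∀ k1 ∈ Finset.range (n / 2 + 1), ∀ k2 ∈ Finset.range (n / 2 + 1),
      k1 ≠ k2 → Disjoint (B k1) (B k2) := by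
    intro k1 _ k2 _ hne
    rw [Finset.disjoint_left]
    intro f h1 h2
    obtain ⟨a1, b1, ⟨⟨ham1, _⟩, hs1⟩, ⟨hbm1, hd1⟩, he1⟩ := (hmemB k1 f).mp h1
    obtain ⟨a2, b2, ⟨⟨ham2, _⟩, hs2⟩, ⟨hbm2, hd2⟩, he2⟩ := (hmemB k2 f).mp h2
    obtain ⟨-, hb⟩ := sq_decomp_unique hs1 hbm1 hs2 hbm2 (by rw [← he1, ← he2])
    exact hne (by rw [← hd1, ← hd2, hb])
  calc Fintype.card F ^ n = (Mf n).card := (hM_card n).symm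
    _ = ∑ k ∈ Finset.range (n / 2 + 1), (B k).card := by
        rw [hcover, Finset.card_biUnion hdisj]
    _ = ∑ k ∈ Finset.range (n / 2 + 1),
        {f : F[X] | (f.Monic ∧ f.natDegree = n - 2*k) ∧ Squarefree f}.ncard
          * Fintype.card F ^ k := by
        refine Finset.sum_congr rfl fun k _ => ?_
        rw [hB]
        rw [Finset.card_image_of_injOn (hinj k), Finset.card_product, hMS_card, hM_card]

/-- target values -/
def t (q : ℕ) : ℕ → ℤ := fun n =>
  if n = 0 then 1 else if n = 1 then (q : ℤ) else (q : ℤ) ^ n - (q : ℤ) ^ (n - 1)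

theorem sum_t (q : ℕ) : ∀ n : ℕ,
    (q : ℤ) ^ n = ∑ k ∈ Finset.range (n / 2 + 1), t q (n - 2 * k) * (q : ℤ) ^ k := by
  intro n
  induction n using Nat.strong_induction_on with
  | _ n ih =>
    match n with
    | 0 => simp [t]
    | 1 => simp [t]
    | (m + 2) =>
      have hdiv : (m + 2) / 2 + 1 = (m / 2 + 1) + 1 := by omega
      rw [hdiv, Finset.sum_range_succ']
      have hre : ∀ j, m + 2 - 2 * (j + 1) = m - 2 * j := by omega
      have : ∑ j ∈ Finset.range (m / 2 + 1), t q (m + 2 - 2 * (j + 1)) * (q : ℤ) ^ (j + 1)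
          = (q : ℤ) * ∑ j ∈ Finset.range (m / 2 + 1), t q (m - 2 * j) * (q : ℤ) ^ j := by
        rw [Finset.mul_sum]
        refine Finset.sum_congr rfl fun j _ => ?_
        rw [hre j, pow_succ]
        ring
      rw [this, ← ih m (by omega)]
      have ht : t q (m + 2 - 2 * 0) = (q : ℤ) ^ (m + 2) - (q : ℤ) ^ (m + 1) := by
        have h2 : m + 2 - 2 * 0 = m + 2 := by omega
        rw [h2]
        simp only [t, if_neg (Nat.succ_ne_zero _), if_neg (by omega : ¬ m + 2 = 1)]
        norm_num
      rw [ht]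
      ring

theorem S_eq_t : ∀ n : ℕ,
    ({f : F[X] | (f.Monic ∧ f.natDegree = n) ∧ Squarefree f}.ncard : ℤ)
      = t (Fintype.card F) n := by
  intro n
  induction n using Nat.strong_induction_on with
  | _ n ih =>
    have h1 : ((Fintype.card F : ℤ)) ^ n
        = ∑ k ∈ Finset.range (n / 2 + 1),
            ({f : F[X] | (f.Monic ∧ f.natDegree = n - 2 * k) ∧ Squarefree f}.ncard : ℤ)
              * (Fintype.card F : ℤ) ^ k := by
      exact_mod_cast congrArg (Nat.cast (R := ℤ)) (recursion F n)
    have h2 := sum_t (Fintype.card F) n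
    have h3 : ∑ k ∈ Finset.range (n / 2 + 1),
        (({f : F[X] | (f.Monic ∧ f.natDegree = n - 2 * k) ∧ Squarefree f}.ncard : ℤ)
          - t (Fintype.card F) (n - 2 * k)) * (Fintype.card F : ℤ) ^ k = 0 := by
      have := h1.symm.trans h2
      simp only [sub_mul]
      rw [Finset.sum_sub_distrib, sub_eq_zero]
      exact this
    rw [Finset.sum_eq_single_of_mem 0 (Finset.mem_range.mpr (by omega)) ?term0] at h3
    · simp only [Nat.mul_zero, Nat.sub_zero, pow_zero, mul_one, sub_eq_zero] at h3
      exact h3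
    · intro k hk hk0
      rw [Finset.mem_range] at hk
      have hlt : n - 2 * k < n := by omega
      rw [ih _ hlt, sub_self, zero_mul]

section FieldPart

variable {p e q : ℕ}
variable {K : Type*} [Field K] [DecidableEq K] [Algebra F K]

theorem fixed_mem_range (hF : Fintype.card F = q) (hq2 : 2 ≤ q) (x : K) (hx : x ^ q = x) :
    ∃ a : F, algebraMap F K a = x := by
  set P : K[X] := X ^ q - X with hP
  have hPdeg : P.degree = q := by
    rw [hP, degree_sub_eq_left_of_degree_lt, degree_X_pow]
    rw [degree_X_pow, degree_X]
    exact_mod_cast by omega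
  have hP0 : P ≠ 0 := by
    intro h
    rw [h, degree_zero] at hPdeg
    simp at hPdeg
  set T : Finset K := Finset.univ.image (algebraMap F K) with hT
  have hTcard : T.card = q := by
    rw [hT, Finset.card_image_of_injective _ (algebraMap F K).injective,
      Finset.card_univ, hF]
  have hroot : ∀ y : K, y ^ q = y → y ∈ P.roots.toFinset := by
    intro y hy
    rw [Multiset.mem_toFinset, mem_roots hP0]
    simp [hP, IsRoot, hy]
  have hTsub : T ⊆ P.roots.toFinset := by
    intro y hy
    rw [hT, Finset.mem_image] at hy
    obtain ⟨a, -, rfl⟩ := hy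
    refine hroot _ ?_
    rw [← map_pow, ← hF, FiniteField.pow_card]
  have hcard : P.roots.toFinset.card ≤ T.card := by
    rw [hTcard]
    refine (Multiset.toFinset_card_le _).trans (P.card_roots'.trans ?_)
    rw [natDegree_eq_of_degree_eq_some hPdeg]
  have hTeq : T = P.roots.toFinset := Finset.eq_of_subset_of_card_le hTsub hcard
  have := hroot x hx
  rw [← hTeq, hT, Finset.mem_image] at this
  obtain ⟨a, -, ha⟩ := this
  exact ⟨a, ha⟩

theorem stable_ncard [IsAlgClosure F K] (hp : p.Prime) (he : 0 < e) (hqpe : q = p ^ e)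
    (hF : Fintype.card F = q) (n : ℕ) :
    {S : Finset K | S.card = n ∧ S.image (fun x => x ^ q) = S}.ncard
      = {f : F[X] | (f.Monic ∧ f.natDegree = n) ∧ Squarefree f}.ncard := by
  classical
  haveI : IsAlgClosed K := IsAlgClosure.isAlgClosed F
  have hq2 : 2 ≤ q := by
    rw [hqpe]
    calc 2 ≤ p := hp.two_le
    _ = p ^ 1 := (pow_one p).symm
    _ ≤ p ^ e := Nat.pow_le_pow_right hp.pos he
  haveI : Fact p.Prime := ⟨hp⟩
  haveI hcharF : CharP F p := by
    obtain ⟨m, hr, hcard⟩ := FiniteField.card F (ringChar F)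
    have hpr : p = ringChar F := by
      have hdvd : p ∣ ringChar F ^ (m : ℕ) := by
        rw [← hcard, hF, hqpe]
        exact dvd_pow_self p he.ne'
      have := hp.dvd_of_dvd_pow hdvd
      exact ((Nat.prime_dvd_prime_iff_eq hp hr).mp this)
    exact hpr ▸ ringChar.charP F
  haveI : CharP K p := charP_of_injective_algebraMap (algebraMap F K).injective p
  set ψ : K →+* K := iterateFrobenius K p e with hψdef
  have hψ : ∀ x : K, ψ x = x ^ q := fun x => by
    rw [hψdef, iterateFrobenius_def, hqpe]
  have hψF : ∀ a : F, ψ (algebraMap F K a) = algebraMap F K a := by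
    intro a
    rw [hψ, ← map_pow, ← hF, FiniteField.pow_card]
  set ψa : K →ₐ[F] K := { ψ with commutes' := hψF } with hψa
  have hψax : ∀ x : K, ψa x = x ^ q := hψ
  set Φ : F[X] → Finset K := fun f => (f.map (algebraMap F K)).roots.toFinset with hΦ
  set MS : Set F[X] := {f : F[X] | (f.Monic ∧ f.natDegree = n) ∧ Squarefree f} with hMS
  set St : Set (Finset K) := {S : Finset K | S.card = n ∧ S.image (fun x => x ^ q) = S}
    with hSt
  have hsepa : ∀ f ∈ MS, f.Separable := fun f hf =>
    PerfectField.separable_iff_squarefree.mpr hf.2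
  -- maps to
  have hmaps : ∀ f ∈ MS, Φ f ∈ St := by
    rintro f ⟨⟨hm, hdeg⟩, hsq⟩
    have hsep := hsepa f ⟨⟨hm, hdeg⟩, hsq⟩
    constructor
    · -- card
      have hnodup := nodup_roots (hsep.map (f := algebraMap F K))
      have hsplit : Splits (f.map (algebraMap F K)) :=
        IsAlgClosed.splits _
      have hcnt := hsplit.natDegree_eq_card_roots
      show (f.map (algebraMap F K)).roots.toFinset.card = n
      rw [Multiset.toFinset_card_of_nodup hnodup, ← hcnt, hm.natDegree_map, hdeg]
    · -- stability
      have h1 : (Φ f).image (fun x => x ^ q) = (Φ f).image ψ :=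
        Finset.image_congr (fun x _ => (hψ x).symm)
      have hf0 : f.map (algebraMap F K) ≠ 0 := (hm.map _).ne_zero
      have h2 : (Φ f).image ψ ⊆ Φ f := by
        intro y hy
        rw [Finset.mem_image] at hy
        obtain ⟨x, hx, rfl⟩ := hy
        rw [hΦ, Multiset.mem_toFinset, mem_roots hf0] at hx ⊢
        have hx' : aeval x f = 0 := by
          rwa [aeval_def, ← eval_map]
        have h5 : aeval (ψa x) f = 0 := by
          rw [Polynomial.aeval_algHom_apply, hx', map_zero]
        rwa [aeval_def, ← eval_map] at h5
      have h3 : ((Φ f).image ψ).card = (Φ f).card :=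
        Finset.card_image_of_injective _ ψ.injective
      rw [h1, Finset.eq_of_subset_of_card_le h2 (le_of_eq h3.symm)]
  -- injective
  have hinj : Set.InjOn Φ MS := by
    rintro f hf g hg hfg
    have hprod : ∀ h ∈ MS, h.map (algebraMap F K)
        = ((Φ h).val.map (fun x => X - C x)).prod := by
      rintro h ⟨⟨hm, hdeg⟩, hsq⟩
      have hsep := (hsepa h ⟨⟨hm, hdeg⟩, hsq⟩).map (f := algebraMap F K)
      have hnodup : (h.map (algebraMap F K)).roots.Nodup := nodup_roots hsep
      have hsplit : Splits (h.map (algebraMap F K)) :=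
        IsAlgClosed.splits _
      have := hsplit.eq_prod_roots_of_monic (hm.map _)
      rw [this, hΦ]
      congr 1
      rw [Multiset.toFinset_val, hnodup.dedup]
    have := (hprod f hf).trans (by rw [hfg, ← hprod g hg])
    exact map_injective _ (algebraMap F K).injective this
  -- surjective
  have hsurj : ∀ S ∈ St, ∃ f ∈ MS, Φ f = S := by
    rintro S ⟨hcard, hstab⟩
    set g : K[X] := ∏ x ∈ S, (X - C x) with hg
    have hgm : g.Monic := monic_prod_of_monic _ _ (fun x _ => monic_X_sub_C x)
    have hgdeg : g.natDegree = n := by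
      rw [hg, natDegree_prod _ _ (fun x _ => X_sub_C_ne_zero x)]
      simp [hcard]
    have hmapψ : g.map ψ = g := by
      rw [hg, Polynomial.map_prod]
      have h1 : ∀ x : K, (X - C x).map ψ = X - C (ψ x) := by
        intro x; simp
      calc (∏ x ∈ S, (X - C x).map ψ) = ∏ x ∈ S, (X - C (ψ x)) := by
            exact Finset.prod_congr rfl fun x _ => h1 x
        _ = ∏ y ∈ S.image ψ, (X - C y) := by
            rw [Finset.prod_image (fun a _ b _ h => ψ.injective h)]
        _ = ∏ y ∈ S, (X - C y) := by
            rw [show S.image ψ = S from by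
              rw [Finset.image_congr (g := fun x => x ^ q) fun x _ => hψ x, hstab]]
    have hcoeff : ∀ i, (g.coeff i) ^ q = g.coeff i := by
      intro i
      have := congrArg (fun h => h.coeff i) hmapψ
      simpa [coeff_map, hψ] using this
    have hlift : g ∈ lifts (algebraMap F K) := by
      rw [lifts_iff_coeff_lifts]
      intro i
      exact fixed_mem_range F hF hq2 _ (hcoeff i)
    obtain ⟨f, hfmap, hfdeg, hfm⟩ := lifts_and_degree_eq_and_monic hlift hgm
    have hfdeg' : f.natDegree = n := by
      rw [← hgdeg, ← hfmap, hfm.natDegree_map]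
    have hgsq : Squarefree g := by
      refine (Separable.squarefree ?_)
      rw [hg]
      exact separable_prod_X_sub_C_iff'.mpr (fun x _ y _ h => h)
    have hfsq : Squarefree f := by
      intro a ha
      have hmap : (a.map (algebraMap F K)) * (a.map (algebraMap F K)) ∣ g := by
        rw [← hfmap, ← Polynomial.map_mul]
        exact Polynomial.map_dvd _ ha
      have hu := hgsq _ hmap
      rw [isUnit_iff_degree_eq_zero] at hu ⊢
      rwa [degree_map_eq_of_injective (algebraMap F K).injective] at hu
    refine ⟨f, ⟨⟨hfm, hfdeg'⟩, hfsq⟩, ?_⟩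
    show (f.map (algebraMap F K)).roots.toFinset = S
    rw [hfmap, hg, roots_prod_X_sub_C, Finset.val_toFinset]
  have himg : Φ '' MS = St := by
    apply Set.eq_of_subset_of_subset
    · rintro _ ⟨f, hf, rfl⟩; exact hmaps f hf
    · intro S hS
      obtain ⟨f, hf, hΦf⟩ := hsurj S hS
      exact ⟨f, hf, hΦf⟩
  rw [← himg, Set.ncard_image_of_injOn hinj]

end FieldPart

end Stmt5Aux


/-- Let `q` be a power of an odd prime `p`, `𝔽_q` the field with `q`
elements, `K` an algebraic closure and `σ(x) = x^q` the Frobenius. For every integer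
`n ≥ 2` the number of `n`-element subsets `S ⊆ K` with `σ(S) = S` equals `q^n − q^{n−1}`;
for `n = 1` it equals `q`. -/
theorem stmt5 (p e q : ℕ) (hp : p.Prime) (hodd : Odd p) (he : 0 < e) (hq : q = p ^ e)
    (F K : Type*) [Field F] [Fintype F] (hF : Fintype.card F = q)
    [Field K] [DecidableEq K] [Algebra F K] [IsAlgClosure F K] (n : ℕ) :
    (2 ≤ n →
      ({S : Finset K | S.card = n ∧ S.image (fun x => x ^ q) = S}.ncard : ℤ)
        = (q : ℤ) ^ n - (q : ℤ) ^ (n - 1))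
    ∧ (n = 1 →
      ({S : Finset K | S.card = n ∧ S.image (fun x => x ^ q) = S}.ncard : ℤ) = q) := by
  classical
  have h1 := Stmt5Aux.stable_ncard F (K := K) hp he hq hF n
  have h2 := Stmt5Aux.S_eq_t F n
  rw [hF] at h2
  have key : ({S : Finset K | S.card = n ∧ S.image (fun x => x ^ q) = S}.ncard : ℤ)
      = Stmt5Aux.t q n := by
    rw [h1]; exact h2
  constructor
  · intro hn
    rw [key]
    simp only [Stmt5Aux.t, if_neg (by omega : ¬ n = 0), if_neg (by omega : ¬ n = 1)]
  · intro hn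
    subst hn
    rw [key]
    simp [Stmt5Aux.t]
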